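/- Fix k ≥ 2 and let M ⊆ ℕ with 1 ∈ M. Let T_M be the subsemigroup of ℕ^k generated by {(1,...,1,m) : m ∈ M}. Then T_M is a subdirect product of ℕ^k (it contains the diagonal {(n,...,n) : n ∈ ℕ} and projects onto every coordinate), and T_M is isomorphic to S_M via the map (n,...,n,p) ↦ (n,p). -/

import Mathlib

/-- `SM M` is the subsemigroup of `ℕ × ℕ` generated by `{(1, m) : m ∈ M}`. -/
def SM (M : Set ℕ+) : AddSubsemigroup (ℕ+ × ℕ+) :=
  AddSubsemigroup.closure {p : ℕ+ × ℕ+ | ∃ m ∈ M, p = (1, m)}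

/-- `TM k M` is the subsemigroup of `ℕ^k` generated by the elements
`(1, …, 1, m)` for `m ∈ M`. -/
def TM (k : ℕ) (M : Set ℕ+) : AddSubsemigroup (Fin k → ℕ+) :=
  AddSubsemigroup.closure
    {v : Fin k → ℕ+ | ∃ m ∈ M, v = fun i : Fin k => if (i : ℕ) = k - 1 then m else 1}

/-- For `k ≥ 2` and `1 ∈ M ⊆ ℕ`, the subsemigroup `T_M ≤ ℕ^k` contains the
diagonal, is a subdirect product (projects onto every coordinate), and is
isomorphic to `S_M` via `(n, …, n, p) ↦ (n, p)`. -/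
theorem TM_subdirect_and_iso_SM (k : ℕ) (hk : 2 ≤ k) (M : Set ℕ+) (h1 : 1 ∈ M) :
    (∀ n : ℕ+, (fun _ => n : Fin k → ℕ+) ∈ TM k M) ∧
    (∀ i : Fin k, ∀ n : ℕ+, ∃ v ∈ TM k M, v i = n) ∧
    ∃ φ : TM k M ≃+ SM M,
      ∀ v : TM k M,
        (φ v : ℕ+ × ℕ+) =
          ((v : Fin k → ℕ+) ⟨0, by omega⟩, (v : Fin k → ℕ+) ⟨k - 1, by omega⟩) := by
  have h0 : 0 < k := by omega
  have hk1 : k - 1 < k := by omega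
  -- the all-ones vector is a generator
  have hone : (fun _ => 1 : Fin k → ℕ+) ∈ TM k M := by
    apply AddSubsemigroup.subset_closure
    exact ⟨1, h1, by funext i; split <;> rfl⟩
  -- diagonal
  have hconst : ∀ n : ℕ+, (fun _ => n : Fin k → ℕ+) ∈ TM k M := by
    intro n
    induction n using PNat.recOn with
    | one => exact hone
    | succ n ih =>
      have : (fun _ => n + 1 : Fin k → ℕ+) = (fun _ => n) + (fun _ => 1) := rfl
      rw [this]
      exact add_mem ih hone
  -- coordinates other than k-1 agree
  have hagree : ∀ v ∈ TM k M, ∀ i : Fin k, (i : ℕ) ≠ k - 1 →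
      v i = v ⟨0, h0⟩ := by
    intro v hv
    induction hv using AddSubsemigroup.closure_induction with
    | mem x hx =>
      obtain ⟨m, _, rfl⟩ := hx
      intro i hi
      simp only [if_neg hi, if_neg (by omega : ¬ (0 : ℕ) = k - 1)]
    | add x y hx hy ihx ihy =>
      intro i hi
      simp only [Pi.add_apply, ihx i hi, ihy i hi]
  -- forward map lands in SM
  have hf : ∀ v ∈ TM k M, ((v ⟨0, h0⟩, v ⟨k - 1, hk1⟩) : ℕ+ × ℕ+) ∈ SM M := by
    intro v hv
    induction hv using AddSubsemigroup.closure_induction with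
    | mem x hx =>
      obtain ⟨m, hm, rfl⟩ := hx
      apply AddSubsemigroup.subset_closure
      refine ⟨m, hm, ?_⟩
      simp [if_neg (by omega : ¬ (0 : ℕ) = k - 1)]
    | add x y hx hy ihx ihy => exact add_mem ihx ihy
  -- backward map lands in TM
  have hg : ∀ p ∈ SM M,
      (fun i : Fin k => if (i : ℕ) = k - 1 then p.2 else p.1) ∈ TM k M := by
    intro p hp
    induction hp using AddSubsemigroup.closure_induction with
    | mem x hx =>
      obtain ⟨m, hm, rfl⟩ := hx
      exact AddSubsemigroup.subset_closure ⟨m, hm, rfl⟩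
    | add x y hx hy ihx ihy =>
      have : (fun i : Fin k => if (i : ℕ) = k - 1 then (x + y).2 else (x + y).1)
          = (fun i : Fin k => if (i : ℕ) = k - 1 then x.2 else x.1)
            + (fun i : Fin k => if (i : ℕ) = k - 1 then y.2 else y.1) := by
        funext i; by_cases h : (i : ℕ) = k - 1 <;> simp [h]
      rw [this]
      exact add_mem ihx ihy
  refine ⟨hconst, fun i n => ⟨_, hconst n, rfl⟩, ?_⟩
  refine ⟨{ toFun := fun v => ⟨(v.1 ⟨0, h0⟩, v.1 ⟨k - 1, hk1⟩), hf v.1 v.2⟩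
            invFun := fun p =>
              ⟨fun i => if (i : ℕ) = k - 1 then p.1.2 else p.1.1, hg p.1 p.2⟩
            left_inv := ?_
            right_inv := ?_
            map_add' := ?_ }, fun v => rfl⟩
  · rintro ⟨v, hv⟩
    apply Subtype.ext
    funext i
    by_cases h : (i : ℕ) = k - 1
    · have : i = ⟨k - 1, hk1⟩ := Fin.ext h
      simp [h, this]
    · simp [h, hagree v hv i h]
  · rintro ⟨p, hp⟩
    apply Subtype.ext
    simp [if_neg (by omega : ¬ (0 : ℕ) = k - 1)]
  · intro x y
    rfl
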